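/- Let T be a triangulated category admitting arbitrary small coproducts and with a set S of compact generators. An object E of T is torsion (i.e. Hom_T(A, E) ⊗ ℚ = 0 for all compact objects A) if and only if Hom_T(A, E) ⊗ ℚ = 0 for all A ∈ S. -/

import Mathlib

open CategoryTheory CategoryTheory.Limits CategoryTheory.Pretriangulated DirectSum

set_option linter.unusedVariables false
set_option linter.unusedSectionVars false
set_option maxHeartbeats 1000000

universe v u

namespace Stmt6

variable {T : Type u} [Category.{v} T] [Preadditive T] [HasZeroObject T]
  [HasShift T ℤ] [∀ n : ℤ, (shiftFunctor T n).Additive] [Pretriangulated T]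
  [HasCoproducts.{v} T]

def IsCompactObj (A : T) : Prop :=
  ∀ (ι : Type v) (_ : DecidableEq ι) (f : ι → T),
    Function.Bijective
      (fun x : DirectSum ι (fun i => A ⟶ f i) =>
        DirectSum.toAddMonoid
          (fun i => AddMonoidHom.mk' (fun g : A ⟶ f i => g ≫ Sigma.ι f i)
            (fun g h => Preadditive.add_comp _ _ _ _ _ _)) x)

def HomTorsion (A E : T) : Prop :=
  ∀ f : A ⟶ E, ∃ n : ℕ, 0 < n ∧ n • f = 0

namespace Aux

noncomputable def theta (A : T) {ι : Type v} [DecidableEq ι] (f : ι → T) :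
    (⨁ i, (A ⟶ f i)) →+ (A ⟶ ∐ f) :=
  DirectSum.toAddMonoid
    (fun i => AddMonoidHom.mk' (fun g : A ⟶ f i => g ≫ Sigma.ι f i)
      (fun g h => Preadditive.add_comp _ _ _ _ _ _))

lemma theta_of (A : T) {ι : Type v} [DecidableEq ι] (f : ι → T) (i : ι) (g : A ⟶ f i) :
    theta A f (DirectSum.of _ i g) = g ≫ Sigma.ι f i :=
  DirectSum.toAddMonoid_of _ _ _

lemma isCompact_bij {A : T} (hA : IsCompactObj A) {ι : Type v} [inst : DecidableEq ι]
    (f : ι → T) : Function.Bijective (theta A f) := hA ι inst f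

lemma isCompactObj_shift {A : T} (hA : IsCompactObj A) (n : ℤ) : IsCompactObj (A⟦n⟧) := by
  intro ι inst f
  letI := inst
  let adj := (shiftEquiv T n).toAdjunction
  let Φ : ∀ X : T, (A⟦n⟧ ⟶ X) ≃ (A ⟶ X⟦-n⟧) := fun X => adj.homEquiv A X
  have Φadd : ∀ (X : T) (a b : A⟦n⟧ ⟶ X), Φ X (a + b) = Φ X a + Φ X b := by
    intro X a b
    show ((shiftEquiv T n).toAdjunction.homEquiv A X) (a + b) =
      ((shiftEquiv T n).toAdjunction.homEquiv A X) a +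
      ((shiftEquiv T n).toAdjunction.homEquiv A X) b
    erw [Adjunction.homEquiv_unit, Adjunction.homEquiv_unit, Adjunction.homEquiv_unit]
    have hm : (shiftEquiv T n).inverse.map (a + b) =
        (shiftEquiv T n).inverse.map a + (shiftEquiv T n).inverse.map b :=
      (shiftFunctor T (-n)).map_add
    erw [hm, Preadditive.comp_add]
    rfl
  have Φnat : ∀ (X Y : T) (a : A⟦n⟧ ⟶ X) (u : X ⟶ Y),
      Φ Y (a ≫ u) = Φ X a ≫ (shiftFunctor T (-n)).map u := by
    intro X Y a u
    show ((shiftEquiv T n).toAdjunction.homEquiv A Y) (a ≫ u) =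
      ((shiftEquiv T n).toAdjunction.homEquiv A X) a ≫ (shiftFunctor T (-n)).map u
    erw [Adjunction.homEquiv_naturality_right]
    rfl
  let ΦHom : ∀ X : T, (A⟦n⟧ ⟶ X) →+ (A ⟶ X⟦-n⟧) := fun X =>
    AddMonoidHom.mk' (Φ X) (Φadd X)
  have Φsymmadd : ∀ (X : T) (a b : A ⟶ X⟦-n⟧),
      (Φ X).symm (a + b) = (Φ X).symm a + (Φ X).symm b := by
    intro X a b
    apply (Φ X).injective
    rw [Equiv.apply_symm_apply, Φadd, Equiv.apply_symm_apply, Equiv.apply_symm_apply]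
  let f' : ι → T := fun i => (f i)⟦-n⟧
  let Ψ : (⨁ i, (A⟦n⟧ ⟶ f i)) →+ (⨁ i, (A ⟶ f' i)) :=
    DirectSum.toAddMonoid fun i =>
      (DirectSum.of (fun i => (A ⟶ f' i)) i).comp (ΦHom (f i))
  let Ψ' : (⨁ i, (A ⟶ f' i)) →+ (⨁ i, (A⟦n⟧ ⟶ f i)) :=
    DirectSum.toAddMonoid fun i =>
      (DirectSum.of (fun i => (A⟦n⟧ ⟶ f i)) i).comp
        (AddMonoidHom.mk' (Φ (f i)).symm (Φsymmadd (f i)))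
  have hΨ'Ψ : ∀ x, Ψ' (Ψ x) = x := by
    intro x
    have : Ψ'.comp Ψ = AddMonoidHom.id _ := by
      apply DirectSum.addHom_ext
      intro i g
      simp only [AddMonoidHom.comp_apply, AddMonoidHom.id_apply, Ψ, Ψ', ΦHom,
        DirectSum.toAddMonoid_of, AddMonoidHom.mk'_apply, Equiv.symm_apply_apply]
    exact DFunLike.congr_fun this x
  have hΨΨ' : ∀ x, Ψ (Ψ' x) = x := by
    intro x
    have : Ψ.comp Ψ' = AddMonoidHom.id _ := by
      apply DirectSum.addHom_ext
      intro i g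
      simp only [AddMonoidHom.comp_apply, AddMonoidHom.id_apply, Ψ, Ψ', ΦHom,
        DirectSum.toAddMonoid_of, AddMonoidHom.mk'_apply, Equiv.apply_symm_apply]
    exact DFunLike.congr_fun this x
  have hΨbij : Function.Bijective Ψ :=
    Function.bijective_iff_has_inverse.2 ⟨Ψ', hΨ'Ψ, hΨΨ'⟩
  let c : (∐ f') ⟶ ((∐ f)⟦-n⟧) := sigmaComparison (shiftFunctor T (-n)) f
  have hciso : IsIso c := by infer_instance
  have key : ∀ x, Φ (∐ f) (theta (A⟦n⟧) f x) = theta A f' (Ψ x) ≫ c := by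
    intro x
    have : (ΦHom (∐ f)).comp (theta (A⟦n⟧) f) =
        (AddMonoidHom.mk' (fun a : A ⟶ ∐ f' => a ≫ c)
          (fun a b => Preadditive.add_comp _ _ _ _ _ _)).comp ((theta A f').comp Ψ) := by
      apply DirectSum.addHom_ext
      intro i g
      simp only [AddMonoidHom.comp_apply, AddMonoidHom.mk'_apply, theta_of, Ψ,
        DirectSum.toAddMonoid_of]
      simp only [ΦHom, AddMonoidHom.mk'_apply]
      rw [Φnat, Category.assoc, ι_comp_sigmaComparison]
    exact DFunLike.congr_fun this x
  have hfun : ∀ x, theta (A⟦n⟧) f x =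
      (Φ (∐ f)).symm ((fun a : A ⟶ ∐ f' => a ≫ c) (theta A f' (Ψ x))) := by
    intro x
    apply (Φ (∐ f)).injective
    rw [Equiv.apply_symm_apply]
    exact key x
  have hcomp : Function.Bijective (fun a : A ⟶ ∐ f' => a ≫ c) := by
    constructor
    · intro a b hab
      simpa using hab =≫ CategoryTheory.inv c
    · intro a
      exact ⟨a ≫ CategoryTheory.inv c, by simp⟩
  have : Function.Bijective (⇑(theta (A⟦n⟧) f)) := by
    rw [funext hfun]
    exact ((Φ (∐ f)).symm.bijective.comp hcomp).comp
      ((isCompact_bij hA f').comp hΨbij)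
  exact this


abbrev ff (E : T) : ULift.{v} ℕ → T := fun _ => E

/-- The telescope map `∐ₖ E ⟶ ∐ₖ E` whose `k`-th component is `ιₖ - (k+2) • ιₖ₊₁`. -/
noncomputable def phi (E : T) : (∐ ff E) ⟶ (∐ ff E) :=
  Sigma.desc fun k => Sigma.ι (ff E) k -
    ((k.down + 2) • Sigma.ι (ff E) (ULift.up (k.down + 1)))

lemma ι_phi (E : T) (k : ULift.{v} ℕ) :
    Sigma.ι (ff E) k ≫ phi E = Sigma.ι (ff E) k -
      ((k.down + 2) • Sigma.ι (ff E) (ULift.up (k.down + 1))) := by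
  simp [phi]

/-- The corresponding map on direct sums of Hom groups. -/
noncomputable def psi (B E : T) :
    (⨁ k : ULift.{v} ℕ, (B ⟶ ff E k)) →+ (⨁ k : ULift.{v} ℕ, (B ⟶ ff E k)) :=
  DirectSum.toAddMonoid fun k => AddMonoidHom.mk'
    (fun g => DirectSum.of (fun k : ULift.{v} ℕ => (B ⟶ ff E k)) k g
      - (k.down + 2) • DirectSum.of (fun k : ULift.{v} ℕ => (B ⟶ ff E k))
          (ULift.up (k.down + 1)) g)
    (fun a b => by
      simp only [map_add, smul_add]
      abel)

lemma psi_of (B E : T) (k : ULift.{v} ℕ) (g : B ⟶ E) :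
    psi B E (DirectSum.of _ k g) =
      DirectSum.of (fun k : ULift.{v} ℕ => (B ⟶ ff E k)) k g
      - (k.down + 2) • DirectSum.of (fun k : ULift.{v} ℕ => (B ⟶ ff E k))
          (ULift.up (k.down + 1)) g :=
  DirectSum.toAddMonoid_of _ _ _

lemma psi_apply_zero (B E : T) (x : ⨁ k : ULift.{v} ℕ, (B ⟶ ff E k)) :
    psi B E x (ULift.up 0) = x (ULift.up 0) := by
  induction x using DirectSum.induction_on with
  | zero => simp
  | of k g =>
    rw [psi_of]
    have hne : (ULift.up (k.down + 1) : ULift.{v} ℕ) ≠ ULift.up 0 := by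
      intro h
      exact Nat.succ_ne_zero k.down (congrArg ULift.down h)
    rw [DirectSum.sub_apply, DirectSum.smul_apply,
      DirectSum.of_eq_of_ne _ _ _ hne.symm, smul_zero, sub_zero]
  | add x y hx hy =>
    rw [map_add, DirectSum.add_apply, hx, hy, DirectSum.add_apply]

lemma psi_apply_succ (B E : T) (x : ⨁ k : ULift.{v} ℕ, (B ⟶ ff E k)) (m : ℕ) :
    psi B E x (ULift.up (m + 1)) =
      x (ULift.up (m + 1)) - (m + 2) • x (ULift.up m) := by
  induction x using DirectSum.induction_on with
  | zero => simp
  | of k g =>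
    obtain ⟨kd⟩ := k
    rw [psi_of, DirectSum.sub_apply, DirectSum.smul_apply]
    by_cases h : kd = m
    · subst h
      have hne : (ULift.up kd : ULift.{v} ℕ) ≠ ULift.up (kd + 1) := by
        intro h; exact Nat.succ_ne_self kd (congrArg ULift.down h).symm
      rw [DirectSum.of_eq_of_ne _ _ _ hne.symm, DirectSum.of_eq_same, DirectSum.of_eq_same]
    · have hne1 : (ULift.up (kd + 1) : ULift.{v} ℕ) ≠ ULift.up (m + 1) := by
        intro hh; exact h (Nat.succ_injective (congrArg ULift.down hh))
      have hne2 : (ULift.up kd : ULift.{v} ℕ) ≠ ULift.up m := by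
        intro hh; exact h (congrArg ULift.down hh)
      simp [DirectSum.of_eq_of_ne _ _ _ hne1.symm, DirectSum.of_eq_of_ne _ _ _ hne2.symm]
  | add x y hx hy =>
    rw [map_add, DirectSum.add_apply, hx, hy, DirectSum.add_apply, DirectSum.add_apply,
      smul_add]
    abel

lemma theta_psi (B E : T) (x : ⨁ k : ULift.{v} ℕ, (B ⟶ ff E k)) :
    theta B (ff E) (psi B E x) = theta B (ff E) x ≫ phi E := by
  induction x using DirectSum.induction_on with
  | zero => simp
  | of k g =>
    rw [psi_of, map_sub, map_nsmul, theta_of, theta_of, Category.assoc, ι_phi,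
      Preadditive.comp_sub, Preadditive.comp_nsmul]
  | add x y hx hy =>
    rw [map_add, map_add, hx, hy, map_add, Preadditive.add_comp]

lemma comp_phi_inj {B : T} (hB : IsCompactObj B) (E : T) (g : B ⟶ ∐ ff E)
    (hg : g ≫ phi E = 0) : g = 0 := by
  obtain ⟨x, rfl⟩ := (isCompact_bij hB (ff E)).2 g
  have h0 : theta B (ff E) (psi B E x) = theta B (ff E) 0 := by
    rw [theta_psi, hg, map_zero]
  have hpsi : psi B E x = 0 := (isCompact_bij hB (ff E)).1 h0
  have hcomp : ∀ m : ℕ, x (ULift.up m) = 0 := by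
    intro m
    induction m with
    | zero =>
      have := psi_apply_zero B E x
      rw [hpsi] at this
      simpa using this.symm
    | succ m ih =>
      have := psi_apply_succ B E x m
      rw [hpsi, ih, smul_zero, sub_zero] at this
      simpa using this.symm
  have : x = 0 := by
    refine DFinsupp.ext fun k => ?_
    obtain ⟨m⟩ := k
    simpa using hcomp m
  rw [this, map_zero]

lemma comp_phi_surj {B : T} (hB : IsCompactObj B) {E : T} (ht : HomTorsion B E)
    (h : B ⟶ ∐ ff E) : ∃ g, g ≫ phi E = h := by
  classical
  obtain ⟨y, rfl⟩ := (isCompact_bij hB (ff E)).2 h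
  -- the recursive solution
  let xr : ℕ → (B ⟶ E) := fun m =>
    Nat.rec (y (ULift.up 0)) (fun m xm => y (ULift.up (m + 1)) + (m + 2) • xm) m
  have hxr0 : xr 0 = y (ULift.up 0) := rfl
  have hxrS : ∀ m : ℕ, xr (m + 1) = y (ULift.up (m + 1)) + (m + 2) • xr m := fun _ => rfl
  -- the support bound
  set N : ℕ := (DFinsupp.support y).sup (fun i => i.down) + 1 with hN
  have hyN : ∀ m : ℕ, N ≤ m → y (ULift.up m) = 0 := by
    intro m hm
    by_contra hy0
    have hmem : (ULift.up m : ULift.{v} ℕ) ∈ DFinsupp.support y :=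
      DFinsupp.mem_support_iff.2 hy0
    have h2 : m ≤ (DFinsupp.support y).sup (fun i => i.down) :=
      Finset.le_sup (f := fun i : ULift.{v} ℕ => i.down) hmem
    omega
  have hprod : ∀ j : ℕ, xr (N + j) =
      (∏ i ∈ Finset.range j, (N + i + 2)) • xr N := by
    intro j
    induction j with
    | zero => simp
    | succ j ih =>
      rw [show N + (j + 1) = (N + j) + 1 from rfl, hxrS, hyN _ (by omega), zero_add, ih,
        Finset.prod_range_succ, smul_smul]
      congr 1
      ring
  obtain ⟨m, hm0, hmx⟩ := ht (xr N)
  -- pick the factor equal to m * (N + 2)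
  set j0 : ℕ := m * (N + 2) - (N + 2) with hj0
  have hfac : N + j0 + 2 = m * (N + 2) := by
    have h1 : N + 2 ≤ m * (N + 2) := Nat.le_mul_of_pos_left _ hm0
    omega
  have hdvd : m ∣ ∏ i ∈ Finset.range (j0 + 1), (N + i + 2) := by
    have : (N + j0 + 2) ∣ ∏ i ∈ Finset.range (j0 + 1), (N + i + 2) :=
      Finset.dvd_prod_of_mem _ (Finset.self_mem_range_succ j0)
    rw [hfac] at this
    exact dvd_trans (Dvd.intro _ rfl) this
  set K : ℕ := N + (j0 + 1) with hK
  have hxK : xr K = 0 := by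
    obtain ⟨c, hc⟩ := hdvd
    rw [hK, hprod, hc, mul_comm, mul_smul, hmx, smul_zero]
  have hxge : ∀ k : ℕ, K ≤ k → xr k = 0 := by
    intro k hk
    obtain ⟨d, rfl⟩ := Nat.exists_eq_add_of_le hk
    induction d with
    | zero => simpa using hxK
    | succ d ih =>
      rw [show K + (d + 1) = (K + d) + 1 from rfl, hxrS, ih (by omega),
        hyN _ (by omega), smul_zero, add_zero]
  -- assemble the element of the direct sum
  let s : Finset (ULift.{v} ℕ) := (Finset.range K).image ULift.up
  let x' : ⨁ k : ULift.{v} ℕ, (B ⟶ ff E k) :=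
    DFinsupp.mk s (fun i => xr i.1.down)
  have hx' : ∀ k : ℕ, x' (ULift.up k) = xr k := by
    intro k
    by_cases hk : k < K
    · have hmem : (ULift.up k : ULift.{v} ℕ) ∈ s := by
        simp only [s, Finset.mem_image, Finset.mem_range]
        exact ⟨k, hk, rfl⟩
      simp only [x', DFinsupp.mk_apply, dif_pos hmem]
    · have hmem : (ULift.up k : ULift.{v} ℕ) ∉ s := by
        simp only [s, Finset.mem_image, Finset.mem_range]
        rintro ⟨a, ha, haa⟩
        have : a = k := congrArg ULift.down haa
        omega
      simp only [x', DFinsupp.mk_apply, dif_neg hmem]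
      exact (hxge k (by omega)).symm
  have hpsix' : psi B E x' = y := by
    refine DFinsupp.ext fun k => ?_
    obtain ⟨kd⟩ := k
    cases kd with
    | zero => rw [psi_apply_zero, hx', hxr0]
    | succ kd =>
      rw [psi_apply_succ, hx', hx', hxrS]
      abel
  exact ⟨theta B (ff E) x', by rw [← theta_psi, hpsix']⟩


lemma comp_phiShift_inj {B : T} (hB : IsCompactObj (B⟦(-1 : ℤ)⟧)) {E : T}
    (t : B ⟶ (∐ ff E)⟦(1 : ℤ)⟧)
    (ht : t ≫ (phi E)⟦(1 : ℤ)⟧' = 0) : t = 0 := by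
  let adj := (shiftEquiv' T (-1 : ℤ) (1 : ℤ) (neg_add_cancel 1)).toAdjunction
  let e : (B⟦(-1 : ℤ)⟧ ⟶ ∐ ff E) ≃ (B ⟶ (∐ ff E)⟦(1 : ℤ)⟧) := adj.homEquiv B (∐ ff E)
  let g : B⟦(-1 : ℤ)⟧ ⟶ ∐ ff E := e.symm t
  have h1 : e (g ≫ phi E) = t ≫ (phi E)⟦(1 : ℤ)⟧' := by
    show (adj.homEquiv B _) (g ≫ phi E) = _
    erw [Adjunction.homEquiv_naturality_right]
    have : e g = t := Equiv.apply_symm_apply e t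
    rw [show (adj.homEquiv B (∐ ff E)) g = e g from rfl, this]
    rfl
  have h2 : e (0 : B⟦(-1 : ℤ)⟧ ⟶ ∐ ff E) = 0 := by
    show (adj.homEquiv B _) 0 = 0
    rw [Adjunction.homEquiv_unit]
    have : ((shiftEquiv' T (-1 : ℤ) (1 : ℤ) (neg_add_cancel 1)).inverse).map
        (0 : B⟦(-1 : ℤ)⟧ ⟶ ∐ ff E) = 0 := by
      show (shiftFunctor T (1 : ℤ)).map 0 = 0
      exact Functor.map_zero _ _ _
    erw [this, Limits.comp_zero]
  have hg : g ≫ phi E = 0 := by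
    apply e.injective
    rw [h1, ht, h2]
  have hg0 : g = 0 := comp_phi_inj hB E g hg
  have : e.symm t = e.symm 0 := by rw [show e.symm t = g from rfl, hg0, ← h2,
    Equiv.symm_apply_apply]
  simpa using e.symm.injective (by rw [this])

lemma torsion_of_factor {A : T} (hA : IsCompactObj A) {E : T} (f : A ⟶ E)
    (hfac : ∃ g : A ⟶ ∐ ff E, g ≫ phi E = f ≫ Sigma.ι (ff E) (ULift.up 0)) :
    ∃ n : ℕ, 0 < n ∧ n • f = 0 := by
  classical
  obtain ⟨g, hg⟩ := hfac
  obtain ⟨x, rfl⟩ := (isCompact_bij hA (ff E)).2 g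
  have h0 : theta A (ff E) (psi A E x) =
      theta A (ff E) (DirectSum.of (fun k : ULift.{v} ℕ => (A ⟶ ff E k)) (ULift.up 0) f) := by
    rw [theta_psi, hg, theta_of]
  have hpsi : psi A E x =
      DirectSum.of (fun k : ULift.{v} ℕ => (A ⟶ ff E k)) (ULift.up 0) f :=
    (isCompact_bij hA (ff E)).1 h0
  have hx0 : x (ULift.up 0) = f := by
    have := psi_apply_zero A E x
    rw [hpsi, DirectSum.of_eq_same] at this
    exact this.symm
  have hxS : ∀ m : ℕ, x (ULift.up (m + 1)) = (m + 2) • x (ULift.up m) := by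
    intro m
    have hne : (ULift.up 0 : ULift.{v} ℕ) ≠ ULift.up (m + 1) := by
      intro hh; exact Nat.succ_ne_zero m (congrArg ULift.down hh).symm
    have := psi_apply_succ A E x m
    rw [hpsi, DirectSum.of_eq_of_ne _ _ _ hne.symm] at this
    have := this.symm
    rw [sub_eq_zero] at this
    exact this
  have hc : ∀ m : ℕ, ∃ c : ℕ, 0 < c ∧ x (ULift.up m) = c • f := by
    intro m
    induction m with
    | zero => exact ⟨1, Nat.one_pos, by rw [hx0, one_smul]⟩
    | succ m ih =>
      obtain ⟨c, hc0, hcx⟩ := ih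
      exact ⟨(m + 2) * c, by positivity, by rw [hxS, hcx, smul_smul]⟩
  have hK : ∃ K : ℕ, x (ULift.up K) = 0 := by
    refine ⟨(DFinsupp.support x).sup (fun i => i.down) + 1, ?_⟩
    by_contra hx0'
    have hmem : (ULift.up ((DFinsupp.support x).sup (fun i => i.down) + 1) : ULift.{v} ℕ)
        ∈ DFinsupp.support x := DFinsupp.mem_support_iff.2 hx0'
    have h2 : (DFinsupp.support x).sup (fun i => i.down) + 1 ≤
        (DFinsupp.support x).sup (fun i => i.down) :=
      Finset.le_sup (f := fun i : ULift.{v} ℕ => i.down) hmem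
    omega
  obtain ⟨K, hK⟩ := hK
  obtain ⟨c, hc0, hcx⟩ := hc K
  exact ⟨c, hc0, by rw [← hcx, hK]⟩

end Aux

/-- Let `T` be a triangulated category admitting arbitrary small
coproducts and with a set `S` of compact generators.  An object `E` of `T` is
torsion (i.e. `Hom_T(A, E) ⊗ ℚ = 0` for all compact objects `A`) if and only if
`Hom_T(A⟦n⟧, E) ⊗ ℚ = 0` for all `A ∈ S` and all shifts `n : ℤ`. -/
theorem torsion_iff_torsion_on_generators [IsTriangulated T]
    (S : Set T)
    (hcpt : ∀ A ∈ S, IsCompactObj A)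
    (hgen : ∀ X : T, (∀ A ∈ S, ∀ n : ℤ, ∀ f : A⟦n⟧ ⟶ X, f = 0) → IsZero X)
    (E : T) :
    (∀ A : T, IsCompactObj A → HomTorsion A E) ↔
      (∀ A ∈ S, ∀ n : ℤ, HomTorsion (A⟦n⟧) E) := by
  constructor
  · intro h A hA n
    exact h _ (Aux.isCompactObj_shift (hcpt A hA) n)
  · intro h A hA
    obtain ⟨C, mor2, mor3, htri⟩ :=
      Pretriangulated.distinguished_cocone_triangle (Aux.phi (T := T) E)
    have hC : IsZero C := by
      apply hgen
      intro B hB n fC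
      have hfm : fC ≫ mor3 = 0 := by
        apply Aux.comp_phiShift_inj
          (Aux.isCompactObj_shift (Aux.isCompactObj_shift (hcpt B hB) n) (-1))
        have h31 := comp_distTriang_mor_zero₃₁ _ htri
        rw [Category.assoc]
        rw [show (Triangle.mk (Aux.phi (T := T) E) mor2 mor3).mor₃ ≫
            (Triangle.mk (Aux.phi (T := T) E) mor2 mor3).mor₁⟦(1 : ℤ)⟧' =
            mor3 ≫ (Aux.phi (T := T) E)⟦(1 : ℤ)⟧' from rfl] at h31
        erw [h31, Limits.comp_zero]
      obtain ⟨g', hf⟩ := Triangle.coyoneda_exact₃ _ htri fC hfm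
      obtain ⟨h', hh⟩ := Aux.comp_phi_surj
        (Aux.isCompactObj_shift (hcpt B hB) n) (h B hB n) g'
      have h12 := comp_distTriang_mor_zero₁₂ _ htri
      rw [show (Triangle.mk (Aux.phi (T := T) E) mor2 mor3).mor₁ ≫
          (Triangle.mk (Aux.phi (T := T) E) mor2 mor3).mor₂ =
          Aux.phi (T := T) E ≫ mor2 from rfl] at h12
      erw [hf, ← hh, Category.assoc]
      show h' ≫ Aux.phi (T := T) E ≫ mor2 = 0
      erw [h12, Limits.comp_zero]
    intro f
    apply Aux.torsion_of_factor hA f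
    have h0 : (f ≫ Sigma.ι (Aux.ff E) (ULift.up 0)) ≫ mor2 = 0 := hC.eq_of_tgt _ _
    obtain ⟨g, hg⟩ := Triangle.coyoneda_exact₂ _ htri
      (f ≫ Sigma.ι (Aux.ff E) (ULift.up 0)) h0
    exact ⟨g, hg.symm⟩

end Stmt6
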